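/- Let W be an integrable real random variable, α ∈ (0,1], and D, q real numbers with D < q, P(W ≤ q) = α, and E[W · 1_{W ≤ q}] = D·α. Then the infimum over all W_o > D of E[max(1 - (W - D)/(W_o - D), 0)] equals α, and it is attained at W_o = q. -/

import Mathlib

open MeasureTheory

theorem stmt_8 {Ω : Type*} [MeasurableSpace Ω] (μ : Measure Ω) [IsProbabilityMeasure μ]
    (W : Ω → ℝ) (hW : Integrable W μ) (α : ℝ) (hα : α ∈ Set.Ioc (0 : ℝ) 1)
    (D q : ℝ) (hDq : D < q) (hq : (μ {ω | W ω ≤ q}).toReal = α)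
    (hD : ∫ ω in {ω | W ω ≤ q}, W ω ∂μ = D * α) :
    IsLeast {x : ℝ | ∃ Wo : ℝ, D < Wo ∧
        x = ∫ ω, max (1 - (W ω - D) / (Wo - D)) 0 ∂μ} α ∧
    ∫ ω, max (1 - (W ω - D) / (q - D)) 0 ∂μ = α := by
  set W' := hW.1.mk W with hW'def
  have hmeas : StronglyMeasurable W' := hW.1.stronglyMeasurable_mk
  have heq : W =ᵐ[μ] W' := hW.1.ae_eq_mk
  have hW' : Integrable W' μ := hW.congr heq
  set s : Set Ω := {ω | W' ω ≤ q} with hsdef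
  have hs : MeasurableSet s := measurableSet_le hmeas.measurable measurable_const
  have hseq : {ω | W ω ≤ q} =ᵐ[μ] s := by
    filter_upwards [heq] with ω h
    show (W ω ≤ q) = (W' ω ≤ q)
    rw [h]
  have hq' : (μ s).toReal = α := by rw [← measure_congr hseq]; exact hq
  have hD' : ∫ ω in s, W' ω ∂μ = D * α := by
    rw [← setIntegral_congr_set hseq,
      integral_congr_ae (ae_restrict_of_ae heq.symm), hD]
  -- key computation
  have key : ∀ c : ℝ, D < c →
      ∫ ω, s.indicator (fun ω => (c - W' ω) / (c - D)) ω ∂μ = α := by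
    intro c hc
    have hcD : c - D ≠ 0 := sub_ne_zero.2 hc.ne'
    rw [integral_indicator hs]
    have h1 : ∫ ω in s, (c - W' ω) / (c - D) ∂μ
        = (∫ ω in s, (c - W' ω) ∂μ) / (c - D) := integral_div _ _
    rw [h1, integral_sub (integrableOn_const (C := c) (measure_lt_top μ s).ne)
      hW'.integrableOn, setIntegral_const, hD', smul_eq_mul, measureReal_def, hq']
    field_simp
  -- pointwise equality at c = q
  have hptq : ∀ ω, max (1 - (W' ω - D) / (q - D)) 0
      = s.indicator (fun ω => (q - W' ω) / (q - D)) ω := by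
    intro ω
    have hqD : (0:ℝ) < q - D := sub_pos.2 hDq
    have h1 : 1 - (W' ω - D) / (q - D) = (q - W' ω) / (q - D) := by
      field_simp
      ring
    rw [h1]
    by_cases h : ω ∈ s
    · rw [Set.indicator_of_mem h]
      have hw : W' ω ≤ q := h
      exact max_eq_left (div_nonneg (by linarith) hqD.le)
    · rw [Set.indicator_of_notMem h]
      have hw : q < W' ω := lt_of_not_ge h
      exact max_eq_right (le_of_lt (div_neg_of_neg_of_pos (by linarith) hqD))
  -- pointwise inequality
  have hpt : ∀ c : ℝ, D < c → ∀ ω,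
      s.indicator (fun ω => (c - W' ω) / (c - D)) ω
        ≤ max (1 - (W' ω - D) / (c - D)) 0 := by
    intro c hc ω
    have hcD : (0:ℝ) < c - D := sub_pos.2 hc
    by_cases h : ω ∈ s
    · rw [Set.indicator_of_mem h]
      have h2 : (c - W' ω) / (c - D) = 1 - (W' ω - D) / (c - D) := by
        field_simp
        ring
      rw [h2]; exact le_max_left _ _
    · rw [Set.indicator_of_notMem h]; exact le_max_right _ _
  have hint : ∀ c : ℝ, Integrable (fun ω => max (1 - (W' ω - D) / (c - D)) 0) μ := by
    intro c
    exact ((integrable_const 1).sub ((hW'.sub (integrable_const D)).div_const _)).pos_part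
  have hcongr : ∀ c : ℝ, ∫ ω, max (1 - (W ω - D) / (c - D)) 0 ∂μ
      = ∫ ω, max (1 - (W' ω - D) / (c - D)) 0 ∂μ := fun c =>
    integral_congr_ae (heq.mono fun ω h => by simp only [h])
  have heqq : ∫ ω, max (1 - (W ω - D) / (q - D)) 0 ∂μ = α := by
    rw [hcongr q, integral_congr_ae (Filter.Eventually.of_forall hptq), key q hDq]
  refine ⟨⟨⟨q, hDq, heqq.symm⟩, ?_⟩, heqq⟩
  rintro x ⟨Wo, hWo, rfl⟩
  rw [hcongr Wo, ← key Wo hWo]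
  refine integral_mono
    ((((integrable_const Wo).sub hW').div_const _).indicator hs) (hint Wo) (hpt Wo hWo)
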